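/- Let A, A' ∈ U(n) and let J_A = i·sign(−i D_A) where D_A is d/dt on L²([0,1],ℂⁿ) with boundary condition f(1) = −A f(0). Then J_{A'} − J_A is Hilbert-Schmidt if and only if A' = A. -/

import Mathlib

open MeasureTheory Complex

/-- Lebesgue measure restricted to the unit interval. -/
noncomputable def unitMeasure : MeasureTheory.Measure ℝ :=
  MeasureTheory.volume.restrict (Set.Ioc (0 : ℝ) 1)

/-- The eigenfunction `φ_k(t) = exp(2πi(λ + k - ½)t)·v` of the boundary value
operator `D_A = d/dt`, `f(1) = -A f(0)`. -/
noncomputable def eigenFun {n : ℕ} (lam : ℝ) (k : ℤ) (v : EuclideanSpace ℂ (Fin n)) :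
    ℝ → EuclideanSpace ℂ (Fin n) :=
  fun t => Complex.exp (2 * Real.pi * Complex.I * (lam + k - 1 / 2) * t) • v

lemma integral01_exp (μ : ℝ) :
    ∫ t : ℝ, Complex.exp (2 * Real.pi * Complex.I * μ * t) ∂unitMeasure =
      if μ = 0 then 1 else
        (Complex.exp (2 * Real.pi * Complex.I * μ) - 1) / (2 * Real.pi * Complex.I * μ) := by
  have h01 : (0:ℝ) ≤ 1 := zero_le_one
  rw [unitMeasure, ← intervalIntegral.integral_of_le h01]
  split_ifs with h
  · subst h; simp
  · have hc : (2 * Real.pi * Complex.I * μ : ℂ) ≠ 0 := by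
      simp [Real.pi_ne_zero, Complex.I_ne_zero, h, Complex.ofReal_eq_zero]
    rw [integral_exp_mul_complex hc]
    simp

lemma inner_eigen_toLp {n : ℕ} (lam lam' : ℝ) (k l : ℤ) (v v' : EuclideanSpace ℂ (Fin n))
    (hm : MeasureTheory.MemLp (eigenFun lam k v) 2 unitMeasure)
    (hm' : MeasureTheory.MemLp (eigenFun lam' l v') 2 unitMeasure) :
    (inner ℂ (hm'.toLp _) (hm.toLp _) : ℂ) =
      (inner ℂ v' v : ℂ) * (if (lam - lam' + k - l : ℝ) = 0 then 1 else
        (Complex.exp (2 * Real.pi * Complex.I * (lam - lam')) - 1) /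
          (2 * Real.pi * Complex.I * (lam - lam' + k - l))) := by
  have hpt : ∀ t : ℝ, (inner ℂ (eigenFun lam' l v' t) (eigenFun lam k v t) : ℂ) =
      Complex.exp (2 * Real.pi * Complex.I * ((lam - lam' + k - l : ℝ) : ℂ) * t) *
        (inner ℂ v' v : ℂ) := by
    intro t
    simp only [eigenFun, inner_smul_left, inner_smul_right]
    rw [← mul_assoc, ← Complex.exp_conj, ← Complex.exp_add]
    congr 2
    simp only [map_mul, map_sub, map_add, Complex.conj_I, Complex.conj_ofReal, map_intCast,
      map_one, map_ofNat, map_div₀]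
    push_cast
    ring
  have hint : (inner ℂ (hm'.toLp _) (hm.toLp _) : ℂ) =
      ∫ t : ℝ, Complex.exp (2 * Real.pi * Complex.I * ((lam - lam' + k - l : ℝ) : ℂ) * t) *
        (inner ℂ v' v : ℂ) ∂unitMeasure := by
    rw [MeasureTheory.L2.inner_def]
    apply integral_congr_ae
    filter_upwards [hm'.coeFn_toLp, hm.coeFn_toLp] with t h1 h2
    rw [h1, h2, hpt]
  rw [hint]
  have : ∀ c : ℂ, (fun t : ℝ => Complex.exp (2 * Real.pi * Complex.I *
      ((lam - lam' + k - l : ℝ) : ℂ) * t) * c) =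
      fun t : ℝ => Complex.exp (2 * Real.pi * Complex.I *
      ((lam - lam' + k - l : ℝ) : ℂ) * t) • c := by intro c; funext t; rw [smul_eq_mul]
  rw [this, integral_smul_const, integral01_exp, smul_eq_mul, mul_comm]
  congr 1
  split_ifs with h
  · rfl
  · have hexp : Complex.exp (2 * Real.pi * Complex.I * ((lam - lam' + k - l : ℝ) : ℂ)) =
        Complex.exp (2 * Real.pi * Complex.I * ((lam : ℂ) - lam')) := by
      rw [show (2 * Real.pi * Complex.I * ((lam - lam' + k - l : ℝ) : ℂ)) =
          2 * Real.pi * Complex.I * ((lam : ℂ) - lam') + (k - l : ℤ) * (2 * Real.pi * Complex.I) by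
        push_cast; ring]
      rw [Complex.exp_add, Complex.exp_int_mul_two_pi_mul_I, mul_one]
    rw [hexp]
    push_cast
    ring_nf

lemma repr_of_diag {ι : Type*} {E : Type*} [NormedAddCommGroup E] [InnerProductSpace ℂ E]
    [CompleteSpace E] (b : HilbertBasis ι ℂ E) (T : E →L[ℂ] E) (σ : ι → ℂ)
    (hT : ∀ i, T (b i) = σ i • b i) (x : E) (q : ι) :
    b.repr (T x) q = σ q * b.repr x q := by
  classical
  have h1 : HasSum (fun i => T (b.repr x i • b i)) (T x) := (b.hasSum_repr x).mapL T
  simp only [_root_.map_smul, hT] at h1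
  have h2 := h1.mapL (innerSL ℂ (b q))
  have horth := b.orthonormal
  rw [orthonormal_iff_ite] at horth
  simp only [innerSL_apply_apply, inner_smul_right, smul_eq_mul, horth, mul_ite, mul_one, mul_zero]
    at h2
  have h4 : HasSum (fun i => if q = i then (b.repr x i : ℂ) * σ i else 0)
      (σ q * b.repr x q) := by
    have h5 := hasSum_ite_eq q ((b.repr x q : ℂ) * σ q)
    have heq : (fun i => if q = i then (b.repr x i : ℂ) * σ i else 0) =
        (fun i => if i = q then (b.repr x q : ℂ) * σ q else 0) := by
      funext i
      by_cases h : q = i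
      · subst h; simp
      · simp [h, Ne.symm h]
    rw [heq, mul_comm (σ q)]
    exact h5
  rw [b.repr_apply_apply]
  exact h2.unique h4

lemma unitary_eq_iff {n : ℕ}
    (A A' : EuclideanSpace ℂ (Fin n) ≃ₗᵢ[ℂ] EuclideanSpace ℂ (Fin n))
    (v v' : OrthonormalBasis (Fin n) ℂ (EuclideanSpace ℂ (Fin n)))
    (lam lam' : Fin n → ℝ)
    (hA : ∀ r, A (v r) = Complex.exp (2 * Real.pi * Complex.I * lam r) • v r)
    (hA' : ∀ r, A' (v' r) = Complex.exp (2 * Real.pi * Complex.I * lam' r) • v' r) :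
    A' = A ↔ ∀ r s, (inner ℂ (v' s) (v r) : ℂ) *
      (Complex.exp (2 * Real.pi * Complex.I * ((lam r : ℂ) - lam' s)) - 1) = 0 := by
  constructor
  · intro h r s
    have key : (inner ℂ (A' (v' s)) (A (v r)) : ℂ) = inner ℂ (v' s) (v r) := by
      rw [h]; exact A.inner_map_map _ _
    rw [hA', hA, inner_smul_left, inner_smul_right, ← Complex.exp_conj, ← mul_assoc,
      ← Complex.exp_add] at key
    have harg : (starRingEnd ℂ) (2 * Real.pi * Complex.I * lam' s) +
        2 * Real.pi * Complex.I * lam r =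
        2 * Real.pi * Complex.I * ((lam r : ℂ) - lam' s) := by
      simp only [map_mul, Complex.conj_I, Complex.conj_ofReal, map_ofNat]
      ring
    rw [harg] at key
    linear_combination key
  · intro h
    have hs : ∀ s, A (v' s) = A' (v' s) := by
      intro s
      rw [hA']
      have hv : v' s = ∑ r, (inner ℂ (v r) (v' s) : ℂ) • v r := (v.sum_repr' (v' s)).symm
      calc A (v' s) = A (∑ r, (inner ℂ (v r) (v' s) : ℂ) • v r) := by rw [← hv]
        _ = ∑ r, ((inner ℂ (v r) (v' s) : ℂ) *
              Complex.exp (2 * Real.pi * Complex.I * lam r)) • v r := by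
            rw [map_sum]
            exact Finset.sum_congr rfl fun r _ => by
              rw [LinearIsometryEquiv.map_smul, hA, smul_smul]
        _ = ∑ r, (Complex.exp (2 * Real.pi * Complex.I * lam' s) *
              (inner ℂ (v r) (v' s) : ℂ)) • v r := by
            refine Finset.sum_congr rfl fun r _ => ?_
            congr 1
            rcases mul_eq_zero.mp (h r s) with h1 | h1
            · have h2 : (inner ℂ (v r) (v' s) : ℂ) = 0 := by
                rw [← inner_conj_symm, h1, map_zero]
              rw [h2, zero_mul, mul_zero]
            · have hE : Complex.exp (2 * Real.pi * Complex.I * lam r) =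
                  Complex.exp (2 * Real.pi * Complex.I * lam' s) := by
                have h3 : Complex.exp (2 * Real.pi * Complex.I * ((lam r : ℂ) - lam' s)) = 1 :=
                  sub_eq_zero.mp h1
                rw [show (2 * Real.pi * Complex.I * ((lam r : ℂ) - lam' s)) =
                  2 * Real.pi * Complex.I * lam r - 2 * Real.pi * Complex.I * lam' s by ring,
                  Complex.exp_sub, div_eq_one_iff_eq (Complex.exp_ne_zero _)] at h3
                exact h3
              rw [hE, mul_comm]
        _ = Complex.exp (2 * Real.pi * Complex.I * lam' s) • v' s := by
            conv_rhs => rw [hv]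
            rw [Finset.smul_sum]
            exact Finset.sum_congr rfl fun r _ => by rw [smul_smul]
    refine LinearIsometryEquiv.ext fun x => ?_
    have hx : x = ∑ s, (inner ℂ (v' s) x : ℂ) • v' s := (v'.sum_repr' x).symm
    rw [hx, map_sum, map_sum]
    refine Finset.sum_congr rfl fun s _ => ?_
    rw [LinearIsometryEquiv.map_smul, LinearIsometryEquiv.map_smul, hs]

lemma norm_term (c : ℂ) (μ : ℝ) :
    ‖(Complex.I * ((-1:ℝ):ℂ) - Complex.I * ((1:ℝ):ℂ)) *
      (c / (2 * Real.pi * Complex.I * μ))‖^2 = ‖c‖^2 / (Real.pi^2 * μ^2) := by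
  rw [show (Complex.I * ((-1:ℝ):ℂ) - Complex.I * ((1:ℝ):ℂ)) = -(2 * Complex.I) by
    push_cast; ring]
  rw [norm_mul, norm_neg, norm_div]
  have h1 : ‖(2 * Complex.I : ℂ)‖ = 2 := by
    rw [norm_mul, Complex.norm_I]; norm_num
  have h2 : ‖(2 * Real.pi * Complex.I * (μ:ℂ) : ℂ)‖ = 2 * Real.pi * |μ| := by
    rw [norm_mul, norm_mul, norm_mul, Complex.norm_I]
    simp [Complex.norm_real, abs_of_pos Real.pi_pos]
  rw [h1, h2]
  rcases eq_or_ne μ 0 with h | h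
  · simp [h]
  · have hπ : (0:ℝ) < Real.pi := Real.pi_pos
    have hμ : (0:ℝ) < |μ| := abs_pos.mpr h
    have hsq : |μ|^2 = μ^2 := _root_.sq_abs μ
    field_simp
    rw [hsq]

set_option maxHeartbeats 1000000 in
/-- for `A, A' ∈ U(n)`, the operators `J_A = i·sign(-iD_A)` differ by a
Hilbert-Schmidt operator if and only if `A' = A`.  Here `J_A` is encoded by its action
on a Hilbert basis of `L²([0,1],ℂⁿ)` consisting of the eigenfunctions of `D_A`
(it multiplies the eigenfunction of eigenvalue `2πi(λ+k-½)` by `i·sign(λ+k-½)`), and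
the Hilbert-Schmidt property is expressed through square-summability of the images of
a Hilbert basis. -/
theorem JA_difference_hilbertSchmidt_iff (n : ℕ)
    (A A' : EuclideanSpace ℂ (Fin n) ≃ₗᵢ[ℂ] EuclideanSpace ℂ (Fin n))
    (v v' : OrthonormalBasis (Fin n) ℂ (EuclideanSpace ℂ (Fin n)))
    (lam lam' : Fin n → ℝ)
    (hA : ∀ r, A (v r) = Complex.exp (2 * Real.pi * Complex.I * lam r) • v r)
    (hA' : ∀ r, A' (v' r) = Complex.exp (2 * Real.pi * Complex.I * lam' r) • v' r)
    (hmem : ∀ (k : ℤ) (r : Fin n), MeasureTheory.MemLp (eigenFun (lam r) k (v r)) 2 unitMeasure)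
    (hmem' : ∀ (k : ℤ) (r : Fin n),
      MeasureTheory.MemLp (eigenFun (lam' r) k (v' r)) 2 unitMeasure)
    (b b' : HilbertBasis (ℤ × Fin n) ℂ
      (MeasureTheory.Lp (EuclideanSpace ℂ (Fin n)) 2 unitMeasure))
    (hb : ∀ p : ℤ × Fin n, b p = (hmem p.1 p.2).toLp (eigenFun (lam p.2) p.1 (v p.2)))
    (hb' : ∀ p : ℤ × Fin n, b' p = (hmem' p.1 p.2).toLp (eigenFun (lam' p.2) p.1 (v' p.2)))
    (J J' : MeasureTheory.Lp (EuclideanSpace ℂ (Fin n)) 2 unitMeasure →L[ℂ]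
      MeasureTheory.Lp (EuclideanSpace ℂ (Fin n)) 2 unitMeasure)
    (hJ : ∀ p : ℤ × Fin n,
      J (b p) = (Complex.I * (Real.sign (lam p.2 + p.1 - 1 / 2) : ℂ)) • (b p))
    (hJ' : ∀ p : ℤ × Fin n,
      J' (b' p) = (Complex.I * (Real.sign (lam' p.2 + p.1 - 1 / 2) : ℂ)) • (b' p)) :
    (Summable fun p : ℤ × Fin n => ‖(J' - J) (b p)‖ ^ 2) ↔ A' = A := by
  classical
  have hinner : ∀ (k l : ℤ) (r s : Fin n), (b'.repr (b (k, r))) (l, s) =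
      (inner ℂ (v' s) (v r) : ℂ) *
      (if (lam r - lam' s + k - l : ℝ) = 0 then 1 else
        (Complex.exp (2 * Real.pi * Complex.I * ((lam r : ℂ) - lam' s)) - 1) /
          (2 * Real.pi * Complex.I * ((lam r : ℂ) - lam' s + k - l))) := by
    intro k l r s
    rw [HilbertBasis.repr_apply_apply, hb (k, r), hb' (l, s)]
    exact inner_eigen_toLp (lam r) (lam' s) k l (v r) (v' s) (hmem k r) (hmem' l s)
  have hrepr : ∀ (k l : ℤ) (r s : Fin n), (b'.repr ((J' - J) (b (k, r)))) (l, s) =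
      (Complex.I * ((Real.sign (lam' s + l - 1 / 2) : ℝ) : ℂ) -
       Complex.I * ((Real.sign (lam r + k - 1 / 2) : ℝ) : ℂ)) * (b'.repr (b (k, r))) (l, s) := by
    intro k l r s
    have hsub : (J' - J) (b (k, r)) = J' (b (k, r)) - J (b (k, r)) := rfl
    rw [hsub, map_sub, lp.coeFn_sub, Pi.sub_apply]
    rw [repr_of_diag b' J'
      (fun q : ℤ × Fin n => Complex.I * ((Real.sign (lam' q.2 + q.1 - 1 / 2) : ℝ) : ℂ)) hJ'
      (b (k, r)) (l, s)]
    rw [hJ (k, r), _root_.map_smul, lp.coeFn_smul, Pi.smul_apply, smul_eq_mul]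
    ring
  rw [unitary_eq_iff A A' v v' lam lam' hA hA']
  constructor
  · -- Summable → ∀ r s, c = 0
    intro hS r s
    by_contra hcne
    obtain ⟨hv0, he0⟩ := mul_ne_zero_iff.mp hcne
    have hμne : ∀ m : ℤ, (lam r - lam' s + m : ℝ) ≠ 0 := by
      intro m hm
      apply he0
      rw [sub_eq_zero]
      have h1 : (lam r : ℝ) - lam' s = -m := by linarith
      have h2 : ((lam r : ℂ) - lam' s) = ((-m : ℤ) : ℂ) := by
        have := congrArg (fun x : ℝ => (x : ℂ)) h1
        push_cast at this ⊢
        exact this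
      rw [h2, show (2 * Real.pi * Complex.I * (((-m : ℤ) : ℤ) : ℂ)) =
        ((-m : ℤ) : ℂ) * (2 * Real.pi * Complex.I) by push_cast; ring,
        Complex.exp_int_mul_two_pi_mul_I]
    set K₀ : ℤ := ⌈(1:ℝ)/2 - lam r⌉ + 1 with hK₀
    set L₀ : ℤ := ⌊(1:ℝ)/2 - lam' s⌋ - 1 with hL₀
    have hKpos : ∀ j : ℕ, 0 < lam r + ((K₀ + j : ℤ) : ℝ) - 1/2 := by
      intro j
      have h := Int.le_ceil ((1:ℝ)/2 - lam r)
      have hj : (0:ℝ) ≤ (j:ℝ) := Nat.cast_nonneg j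
      push_cast [hK₀]
      linarith
    have hLneg : ∀ i : ℕ, lam' s + ((L₀ - i : ℤ) : ℝ) - 1/2 < 0 := by
      intro i
      have h := Int.floor_le ((1:ℝ)/2 - lam' s)
      have hi : (0:ℝ) ≤ (i:ℝ) := Nat.cast_nonneg i
      push_cast [hL₀]
      linarith
    set N : ℝ := ‖(inner ℂ (v' s) (v r) : ℂ) *
      (Complex.exp (2 * Real.pi * Complex.I * ((lam r:ℂ) - lam' s)) - 1)‖^2 with hNdef
    have hN : 0 < N := by
      have : (inner ℂ (v' s) (v r) : ℂ) *
          (Complex.exp (2 * Real.pi * Complex.I * ((lam r:ℂ) - lam' s)) - 1) ≠ 0 :=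
        mul_ne_zero hv0 he0
      rw [hNdef]
      exact pow_pos (norm_pos_iff.mpr this) 2
    set B : ℝ := |lam r - lam' s| + |((K₀ - L₀ : ℤ) : ℝ)| with hBdef
    have hB : 0 ≤ B := by positivity
    set D : ℝ := N / (Real.pi^2 * (B+2)^2) with hDdef
    have hD : 0 < D := by positivity
    have key : ∀ j : ℕ, D / ((j:ℝ)+1) ≤ ‖(J' - J) (b ((K₀ + j : ℤ), r))‖^2 := by
      intro j
      set y := (J' - J) (b ((K₀ + j : ℤ), r)) with hy
      have hBessel : ∑ q ∈ (Finset.range (j+1)).image (fun i : ℕ => ((L₀ - i : ℤ), s)),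
          ‖(inner ℂ (b' q) y : ℂ)‖^2 ≤ ‖y‖^2 :=
        b'.orthonormal.sum_inner_products_le y
      have hinj : ∀ x ∈ Finset.range (j+1), ∀ y ∈ Finset.range (j+1),
          (fun i : ℕ => ((L₀ - i : ℤ), s)) x = (fun i : ℕ => ((L₀ - i : ℤ), s)) y → x = y := by
        intro a _ c _ hac
        simp only [Prod.mk.injEq] at hac
        omega
      rw [Finset.sum_image hinj] at hBessel
      have hterm : ∀ i ∈ Finset.range (j+1),
          D / ((j:ℝ)+1)^2 ≤ ‖(inner ℂ (b' ((L₀ - i : ℤ), s)) y : ℂ)‖^2 := by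
        intro i hi
        have hij : (i : ℝ) ≤ j := by
          have := Finset.mem_range.mp hi
          exact_mod_cast Nat.lt_succ_iff.mp this
        rw [← b'.repr_apply_apply, hy, hrepr (K₀ + j) (L₀ - i) r s,
          hinner (K₀ + j) (L₀ - i) r s]
        rw [Real.sign_of_neg (hLneg i), Real.sign_of_pos (hKpos j)]
        set μ : ℝ := lam r - lam' s + ((K₀ + j : ℤ) : ℝ) - ((L₀ - i : ℤ) : ℝ) with hμdef
        have hμ0 : (lam r - lam' s + (K₀ + j : ℤ) - (L₀ - i : ℤ) : ℝ) ≠ 0 := by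
          have h := hμne (K₀ + j - (L₀ - i))
          push_cast at h ⊢
          intro hcontra
          exact h (by linarith)
        rw [if_neg hμ0]
        have hform : (inner ℂ (v' s) (v r) : ℂ) *
            ((Complex.exp (2 * Real.pi * Complex.I * ((lam r : ℂ) - lam' s)) - 1) /
              (2 * Real.pi * Complex.I * ((lam r : ℂ) - lam' s + (K₀ + j : ℤ) - (L₀ - i : ℤ)))) =
            ((inner ℂ (v' s) (v r) : ℂ) *
              (Complex.exp (2 * Real.pi * Complex.I * ((lam r : ℂ) - lam' s)) - 1)) /
              (2 * Real.pi * Complex.I * (μ : ℂ)) := by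
          rw [hμdef]
          push_cast
          ring
        rw [hform, norm_term]
        -- now : D / (j+1)^2 ≤ N / (π² μ²)
        have hμb : |μ| ≤ (B + 2) * ((j:ℝ) + 1) := by
          have h1 : |μ| ≤ |lam r - lam' s| + (|((K₀ - L₀ : ℤ) : ℝ)| + ((j:ℝ) + i)) := by
            have heq : μ = (lam r - lam' s) + (((K₀ - L₀ : ℤ) : ℝ) + ((j:ℝ) + i)) := by
              rw [hμdef]; push_cast; ring
            rw [heq]
            calc |(lam r - lam' s) + (((K₀ - L₀ : ℤ) : ℝ) + ((j:ℝ) + i))| ≤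
                |lam r - lam' s| + |((K₀ - L₀ : ℤ) : ℝ) + ((j:ℝ) + i)| := abs_add_le _ _
              _ ≤ |lam r - lam' s| + (|((K₀ - L₀ : ℤ) : ℝ)| + |((j:ℝ) + i)|) := by
                  gcongr; exact abs_add_le _ _
              _ = |lam r - lam' s| + (|((K₀ - L₀ : ℤ) : ℝ)| + ((j:ℝ) + i)) := by
                  have habs : |((j:ℝ) + i)| = (j:ℝ) + i := abs_of_nonneg (by positivity)
                  rw [habs]
          have hj0 : (0:ℝ) ≤ (j:ℝ) := Nat.cast_nonneg j
          have hexp : (B+2)*((j:ℝ)+1) = B*(j:ℝ) + B + 2*(j:ℝ) + 2 := by ring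
          have hBj : 0 ≤ B * (j:ℝ) := mul_nonneg hB hj0
          rw [hBdef] at hexp hBj ⊢
          linarith
        have hμsq : μ^2 ≤ (B + 2)^2 * ((j:ℝ) + 1)^2 := by
          have h2 : μ^2 = |μ|^2 := (_root_.sq_abs μ).symm
          rw [h2, ← mul_pow]
          exact pow_le_pow_left₀ (abs_nonneg μ) hμb 2
        have hμpos : 0 < μ^2 := by
          have : μ ≠ 0 := by rw [hμdef]; exact hμ0
          positivity
        rw [hDdef, div_div]
        have hle : Real.pi^2 * μ^2 ≤ Real.pi^2 * (B+2)^2 * ((j:ℝ)+1)^2 := by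
          have hpi2 : (0:ℝ) ≤ Real.pi^2 := sq_nonneg _
          calc Real.pi^2 * μ^2 ≤ Real.pi^2 * ((B + 2)^2 * ((j:ℝ) + 1)^2) := by
                exact mul_le_mul_of_nonneg_left hμsq hpi2
            _ = Real.pi^2 * (B+2)^2 * ((j:ℝ)+1)^2 := by ring
        exact div_le_div_of_nonneg_left hN.le (by positivity) hle
      calc D / ((j:ℝ)+1) = (j+1 : ℕ) * (D / ((j:ℝ)+1)^2) := by
            push_cast; field_simp
        _ = ∑ _i ∈ Finset.range (j+1), D / ((j:ℝ)+1)^2 := by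
            rw [Finset.sum_const, Finset.card_range, nsmul_eq_mul]
        _ ≤ ∑ i ∈ Finset.range (j+1), ‖(inner ℂ (b' ((L₀ - i : ℤ), s)) y : ℂ)‖^2 :=
            Finset.sum_le_sum hterm
        _ ≤ ‖y‖^2 := hBessel
    have hsum1 : Summable (fun j : ℕ => ‖(J' - J) (b ((K₀ + j : ℤ), r))‖^2) := by
      apply hS.comp_injective (i := fun j : ℕ => ((K₀ + j : ℤ), r))
      intro a c hac
      simp only [Prod.mk.injEq] at hac
      omega
    have hsum2 : Summable (fun j : ℕ => D / ((j:ℝ)+1)) :=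
      Summable.of_nonneg_of_le (fun j => by positivity) key hsum1
    have hsum3 : Summable (fun j : ℕ => 1 / (((j+1 : ℕ)):ℝ)) := by
      have h4 := hsum2.mul_left (1/D)
      apply h4.congr
      intro j
      push_cast
      field_simp
    exact Real.not_summable_one_div_natCast ((summable_nat_add_iff 1).mp hsum3)
  · -- ∀ r s, c = 0 → Summable
    intro hc
    have hz : ∀ p : ℤ × Fin n, (J' - J) (b p) = 0 := by
      rintro ⟨k, r⟩
      have h0 : b'.repr ((J' - J) (b (k, r))) = 0 := by
        apply lp.ext
        funext q
        obtain ⟨l, s⟩ := q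
        rw [hrepr k l r s, hinner k l r s, lp.coeFn_zero, Pi.zero_apply]
        by_cases hμ : (lam r - lam' s + k - l : ℝ) = 0
        · rw [if_pos hμ]
          have hsign : lam' s + (l:ℝ) - 1/2 = lam r + (k:ℝ) - 1/2 := by linarith
          rw [hsign]
          ring
        · rw [if_neg hμ]
          rcases mul_eq_zero.mp (hc r s) with h1 | h1
          · rw [h1]; ring
          · rw [h1, zero_div, mul_zero, mul_zero]
      exact (LinearIsometryEquiv.map_eq_zero_iff b'.repr).mp h0
    have : (fun p : ℤ × Fin n => ‖(J' - J) (b p)‖ ^ 2) = fun _ => 0 := by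
      funext p
      rw [hz p, norm_zero]
      norm_num
    rw [this]
    exact summable_zero
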